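/- For a positive integer m, the largest k such that the binomial coefficient C(m+1, k) is odd and k ≤ m equals m + 1 - 2^{ν(m+1)}, where ν is the 2-adic valuation. -/

import Mathlib

open Nat Finset

private lemma odd_choose_iff {n k : ℕ} (hkn : k ≤ n) :
    Odd (n.choose k) ↔ padicValNat 2 (n.choose k) = 0 := by
  have hpos := Nat.choose_pos hkn
  rw [padicValNat.eq_zero_iff, Nat.odd_iff, ← Nat.two_dvd_ne_zero]
  constructor
  · intro h; exact Or.inr (Or.inr h)
  · rintro (h | h | h) <;> omega

private lemma key (n : ℕ) (hn : 0 < n) :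
    IsGreatest {k : ℕ | k ≤ n - 1 ∧ Odd (n.choose k)}
      (n - 2 ^ padicValNat 2 n) := by
  haveI : Fact (Nat.Prime 2) := ⟨Nat.prime_two⟩
  set v := padicValNat 2 n with hv
  have hdvd : 2 ^ v ∣ n := pow_padicValNat_dvd
  have hle : 2 ^ v ≤ n := Nat.le_of_dvd hn hdvd
  have hvpos : 0 < 2 ^ v := Nat.pow_pos (by norm_num)
  have hnotdvd : ¬ 2 ^ (v + 1) ∣ n := pow_succ_padicValNat_not_dvd (p := 2) hn.ne'
  have hb : Nat.log 2 n < Nat.log 2 n + 1 := Nat.lt_succ_self _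
  have hdvd' : 2 ^ (v + 1) ∣ n - 2 ^ v := by
    obtain ⟨u, hu⟩ := hdvd
    have hu_odd : ¬ 2 ∣ u := by
      rintro ⟨w, hw⟩
      exact hnotdvd ⟨w, by rw [hu, hw]; ring⟩
    obtain ⟨w, hw⟩ : ∃ w, u = 2 * w + 1 := by
      rcases Nat.even_or_odd u with h | h
      · exact absurd h.two_dvd hu_odd
      · obtain ⟨w, hw⟩ := h; exact ⟨w, by omega⟩
    refine ⟨w, ?_⟩
    subst hw
    have e : 2 ^ v * (2 * w + 1) = 2 ^ (v + 1) * w + 2 ^ v := by ring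
    omega
  constructor
  · refine ⟨by omega, ?_⟩
    rw [Nat.choose_symm hle, odd_choose_iff hle, padicValNat_choose hle hb]
    rw [Finset.card_eq_zero, Finset.filter_eq_empty_iff]
    intro i hi
    simp only [Finset.mem_Ico] at hi
    simp only [not_le]
    have hipos : 0 < 2 ^ i := Nat.pow_pos (by norm_num)
    rcases le_or_gt i v with h | h
    · -- i ≤ v : both remainders are 0
      have h1 : 2 ^ v % 2 ^ i = 0 :=
        Nat.mod_eq_zero_of_dvd (pow_dvd_pow 2 h)
      have h2 : (n - 2 ^ v) % 2 ^ i = 0 :=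
        Nat.mod_eq_zero_of_dvd
          (Nat.dvd_sub ((pow_dvd_pow 2 h).trans hdvd) (pow_dvd_pow 2 h))
      omega
    · -- i > v
      have h1 : 2 ^ v % 2 ^ i = 2 ^ v := Nat.mod_eq_of_lt (Nat.pow_lt_pow_right (by norm_num) h)
      have h2 : 2 ^ (v + 1) ∣ (n - 2 ^ v) % 2 ^ i :=
        (Nat.dvd_mod_iff (pow_dvd_pow 2 h)).mpr hdvd'
      obtain ⟨t, ht⟩ := h2
      have hs : 2 ^ i = 2 ^ (v + 1) * 2 ^ (i - (v + 1)) := by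
        rw [← pow_add]; congr 1; omega
      have hmodlt : (n - 2 ^ v) % 2 ^ i < 2 ^ i := Nat.mod_lt _ hipos
      have htlt : t < 2 ^ (i - (v + 1)) := by
        by_contra hcc
        push_neg at hcc
        have : 2 ^ i ≤ 2 ^ (v + 1) * t := by
          rw [hs]; exact Nat.mul_le_mul_left _ hcc
        omega
      have hbound : (n - 2 ^ v) % 2 ^ i + 2 ^ (v + 1) ≤ 2 ^ i := by
        rw [ht, hs, ← Nat.mul_succ]
        exact Nat.mul_le_mul_left _ htlt
      have e : 2 ^ (v + 1) = 2 * 2 ^ v := by ring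
      omega
  · rintro k ⟨hk, hodd⟩
    by_contra hc
    push_neg at hc
    have hkn : k ≤ n := by omega
    set d := n - k with hd
    have hd1 : 0 < d := by omega
    have hdlt : d < 2 ^ v := by omega
    have hnd2 : ¬ 2 ^ (padicValNat 2 d + 1) ∣ d :=
      pow_succ_padicValNat_not_dvd (p := 2) hd1.ne'
    have hjdvd0 : 2 ^ padicValNat 2 d ∣ d := pow_padicValNat_dvd
    generalize hj : padicValNat 2 d = j at hnd2 hjdvd0
    have hjdvd : 2 ^ j ∣ d := hjdvd0
    obtain ⟨u, hu⟩ := hjdvd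
    have hu_odd : ¬ 2 ∣ u := by
      rintro ⟨w, hw⟩
      exact hnd2 ⟨w, by rw [hu, hw]; ring⟩
    obtain ⟨w, hw⟩ : ∃ w, u = 2 * w + 1 := by
      rcases Nat.even_or_odd u with h | h
      · exact absurd h.two_dvd hu_odd
      · obtain ⟨w, hw⟩ := h; exact ⟨w, by omega⟩
    have hjpos : 0 < 2 ^ j := Nat.pow_pos (by norm_num)
    have hjled : 2 ^ j ≤ d := Nat.le_of_dvd hd1 ⟨u, hu⟩
    have hjv : j + 1 ≤ v := by
      by_contra hcc
      push_neg at hcc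
      have : 2 ^ v ≤ 2 ^ j := Nat.pow_le_pow_right (by norm_num) (by omega)
      omega
    -- d % 2^(j+1) = 2^j
    have hmodd : d % 2 ^ (j + 1) = 2 ^ j := by
      rw [hu, hw, pow_succ, Nat.mul_mod_mul_left]
      have : (2 * w + 1) % 2 = 1 := by omega
      rw [this, mul_one]
    -- carries
    rw [odd_choose_iff hkn, padicValNat_choose hkn hb,
      Finset.card_eq_zero, Finset.filter_eq_empty_iff] at hodd
    have hmem : j + 1 ∈ Finset.Ico 1 (Nat.log 2 n + 1) := by
      simp only [Finset.mem_Ico]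
      refine ⟨by omega, ?_⟩
      have : 2 ^ (j + 1) ≤ n := le_trans (Nat.pow_le_pow_right (by norm_num) hjv) hle
      have := Nat.le_log_iff_pow_le (by norm_num) hn.ne' |>.mpr this
      omega
    have hnc := hodd hmem
    simp only [not_le] at hnc
    rw [← hd] at hnc
    -- contradiction: k % 2^(j+1) + d % 2^(j+1) ≡ 0 mod 2^(j+1) but positive and small
    have hndvd : 2 ^ (j + 1) ∣ n := (pow_dvd_pow 2 hjv).trans hdvd
    have hsum : (k % 2 ^ (j + 1) + d % 2 ^ (j + 1)) % 2 ^ (j + 1) = 0 := by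
      rw [← Nat.add_mod]
      have hkd : k + d = n := by omega
      rw [hkd]
      exact Nat.mod_eq_zero_of_dvd hndvd
    have h9 := Nat.mod_eq_of_lt hnc
    omega

/-- For a positive integer m, the largest k ≤ m with C(m+1,k) odd is
m + 1 - 2^{ν(m+1)}. -/
theorem stmt_3 (m : ℕ) (hm : 0 < m) :
    IsGreatest {k : ℕ | k ≤ m ∧ Odd ((m + 1).choose k)}
      (m + 1 - 2 ^ padicValNat 2 (m + 1)) := by
  have h := key (m + 1) (by omega)
  simpa using h
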